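/- (The non-Gaussian finite-control-complexity oscillator protocol strictly exceeds the Landauer limit.) For every s > 0, writing x := e^{−s}, the strict inequality s·x(2+x)/(1−x)² > s/(1−x) + log(x/(1−x)) holds. -/

import Mathlib

/-- The non-Gaussian finite-control-complexity oscillator protocol strictly
exceeds the Landauer limit: for all `s > 0`, with `x = e^{−s}`,
`s·x(2+x)/(1−x)² > s/(1−x) + log(x/(1−x))`. -/
theorem nongaussian_protocol_exceeds_landauer (s : ℝ) (hs : 0 < s) :
    s / (1 - Real.exp (-s))
        + Real.log (Real.exp (-s) / (1 - Real.exp (-s)))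
      < s * (Real.exp (-s) * (2 + Real.exp (-s))) / (1 - Real.exp (-s)) ^ 2 := by
  set x := Real.exp (-s) with hxdef
  have hx0 : 0 < x := Real.exp_pos _
  have hx1 : x < 1 := by
    have : (-s : ℝ) < 0 := by linarith
    simpa [hxdef] using Real.exp_lt_one_iff.mpr this
  have h1x : 0 < 1 - x := by linarith
  have hlogx : Real.log x = -s := Real.log_exp _
  have hlog : Real.log (x / (1 - x)) = -s - Real.log (1 - x) := by
    rw [Real.log_div (ne_of_gt hx0) (ne_of_gt h1x), hlogx]
  -- key analytic fact: -log(1-x) < x/(1-x), i.e. -log(1-x)*(1-x) < x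
  have hA : -Real.log (1 - x) * (1 - x) < x := by
    have h := Real.log_lt_sub_one_of_pos (x := (1 - x)⁻¹) (by positivity)
      (by
        intro h
        have : (1 : ℝ) - x = 1 := by
          field_simp at h
          linarith
        linarith)
    rw [Real.log_inv] at h
    have h2 : (1 - x)⁻¹ - 1 = x / (1 - x) := by field_simp; ring
    rw [h2] at h
    have := (mul_lt_mul_of_pos_right h h1x)
    calc -Real.log (1 - x) * (1 - x) < (x / (1 - x)) * (1 - x) := this
      _ = x := by field_simp
  -- s ≥ 1 - x since e^{-s} ≥ 1 - s
  have hB : 1 - x ≤ s := by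
    have := Real.add_one_le_exp (-s)
    simp only [hxdef] at *
    linarith
  rw [hlog]
  rw [lt_div_iff₀ (by positivity : (0:ℝ) < (1 - x) ^ 2)]
  have e1 : (s / (1 - x) + (-s - Real.log (1 - x))) * (1 - x) ^ 2
      = s * (1 - x) + (-s - Real.log (1 - x)) * (1 - x) ^ 2 := by
    field_simp
  rw [e1]
  nlinarith [mul_lt_mul_of_pos_right hA h1x, mul_le_mul_of_nonneg_right hB (le_of_lt hx0),
    mul_pos hx0 hx0, mul_pos (mul_pos hx0 hx0) hs, mul_pos hx0 hs]
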